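/- Let S be a square-integrable martingale on [0,T] with E[∫_0^T S_t² dt] < ∞. Then (i) for every φ ∈ A_{Φ_0} with E[∫_0^T φ_t² dt] < ∞, E[V^{Φ_0,φ}_T] ≤ −Φ_0²Λ/(2T); and (ii) the constant (deterministic) strategy φ_t ≡ −Φ_0/T belongs to A_{Φ_0} and satisfies E[V^{Φ_0,φ}_T] = −Φ_0²Λ/(2T), so constant-rate liquidation is optimal when the price is a martingale. -/

import Mathlib

open MeasureTheory Set
open scoped ENNReal

/-- The terminal wealth `V^{Φ₀,φ}_T = -Φ₀ S_0 - ∫_0^T φ_t S_t dt - (Λ/2) ∫_0^T φ_t² dt`. -/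
noncomputable def wealth {Ω : Type*} (T Λ Φ₀ : ℝ) (S φ : ℝ → Ω → ℝ) (ω : Ω) : ℝ :=
  -Φ₀ * S 0 ω - (∫ t in Icc (0:ℝ) T, φ t ω * S t ω)
    - (Λ / 2) * ∫ t in Icc (0:ℝ) T, (φ t ω) ^ 2

/-- The admissible set `𝒜_{Φ₀}`: progressively measurable processes `φ` with
`∫_0^T φ_t² dt < ∞` a.s. and `Φ₀ + ∫_0^T φ_t dt = 0` a.s. -/
def isAdmissible {Ω : Type*} {m0 : MeasurableSpace Ω} (T Φ₀ : ℝ)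
    (ℱ : Filtration ℝ m0) (μ : Measure Ω) (φ : ℝ → Ω → ℝ) : Prop :=
  ProgMeasurable ℱ φ ∧
    (∀ᵐ ω ∂μ, IntegrableOn (fun t => (φ t ω) ^ 2) (Icc (0:ℝ) T)) ∧
    (∀ᵐ ω ∂μ, Φ₀ + ∫ t in Icc (0:ℝ) T, φ t ω = 0)

/-- A progressively measurable process is a.e. strongly measurable on `Ω × [0,T]`. -/
lemma prog_aesm {Ω : Type*} {m0 : MeasurableSpace Ω} {ℱ : Filtration ℝ m0}
    (μ : Measure Ω) {T : ℝ} {φ : ℝ → Ω → ℝ} (h : ProgMeasurable ℱ φ) :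
    AEStronglyMeasurable (fun p : Ω × ℝ => φ p.2 p.1)
      (μ.prod (volume.restrict (Icc (0:ℝ) T))) := by
  have hIic : MeasurableSet (Iic T) := measurableSet_Iic
  set g : (Iic T) × Ω → Ω × ℝ := fun q => (q.2, (q.1 : ℝ)) with hgdef
  have hemb : MeasurableEmbedding g := by
    have h1 : MeasurableEmbedding (Prod.map ((↑) : Iic T → ℝ) (id : Ω → Ω)) :=
      (MeasurableEmbedding.subtype_coe hIic).prodMap MeasurableEmbedding.id
    have h2 := (MeasurableEquiv.prodComm (α := ℝ) (β := Ω)).measurableEmbedding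
    exact h2.comp h1
  have hf : StronglyMeasurable (fun q : Iic T × Ω => φ q.1 q.2) := by
    refine (h T).mono ?_
    exact sup_le_sup le_rfl (MeasurableSpace.comap_mono (ℱ.le T))
  have hext : StronglyMeasurable
      (Function.extend g (fun q : Iic T × Ω => φ q.1 q.2) (fun _ => 0)) :=
    hemb.stronglyMeasurable_extend hf stronglyMeasurable_const
  refine ⟨_, hext, ?_⟩
  have hae : ∀ᵐ p ∂(μ.prod (volume.restrict (Icc (0:ℝ) T))), p.2 ∈ Iic T := by
    refine ae_of_ae_map measurable_snd.aemeasurable ?_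
    rw [Measure.map_snd_prod]
    refine Measure.ae_smul_measure ?_ _
    filter_upwards [ae_restrict_mem measurableSet_Icc] with t ht using ht.2
  filter_upwards [hae] with p hp
  have hpg : p = g (⟨p.2, hp⟩, p.1) := rfl
  rw [hpg, hemb.injective.extend_apply]

/-- Sections of a progressively measurable process are a.e. strongly measurable on `[0,T]`. -/
lemma prog_sect {Ω : Type*} {m0 : MeasurableSpace Ω} {ℱ : Filtration ℝ m0}
    {T : ℝ} {φ : ℝ → Ω → ℝ} (h : ProgMeasurable ℱ φ) (ω : Ω) :
    AEStronglyMeasurable (fun t => φ t ω) (volume.restrict (Icc (0:ℝ) T)) := by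
  have hf : StronglyMeasurable (fun q : Iic T × Ω => φ q.1 q.2) := by
    refine (h T).mono ?_
    exact sup_le_sup le_rfl (MeasurableSpace.comap_mono (ℱ.le T))
  have hsect : StronglyMeasurable (fun s : Iic T => φ s ω) :=
    hf.comp_measurable (measurable_id.prodMk measurable_const)
  have hemb : MeasurableEmbedding ((↑) : Iic T → ℝ) :=
    MeasurableEmbedding.subtype_coe measurableSet_Iic
  have hext := hemb.stronglyMeasurable_extend hsect
    (stronglyMeasurable_const (b := (0:ℝ)))
  refine ⟨_, hext, ?_⟩
  filter_upwards [ae_restrict_mem measurableSet_Icc] with t ht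
  exact (Function.Injective.extend_apply hemb.injective
    (fun s : Iic T => φ s ω) (fun _ => 0) ⟨t, ht.2⟩).symm

/-- A product of two functions with integrable squares is integrable. -/
lemma sq_mul_integrable {α : Type*} {mα : MeasurableSpace α} {μ : Measure α} {f g : α → ℝ}
    (hf : AEStronglyMeasurable f μ) (hg : AEStronglyMeasurable g μ)
    (hf2 : Integrable (fun x => f x ^ 2) μ) (hg2 : Integrable (fun x => g x ^ 2) μ) :
    Integrable (fun x => f x * g x) μ := by
  refine Integrable.mono' ((hf2.add hg2).div_const 2) (hf.mul hg)
    (Filter.Eventually.of_forall fun x => ?_)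
  simp only [Real.norm_eq_abs, abs_mul, Pi.add_apply]
  nlinarith [sq_abs (f x), sq_abs (g x), sq_nonneg (|f x| - |g x|)]

/-- On a finite measure space, a function with integrable square is integrable. -/
lemma integrable_of_sq {α : Type*} {mα : MeasurableSpace α} {μ : Measure α} [IsFiniteMeasure μ]
    {f : α → ℝ} (hf : AEStronglyMeasurable f μ)
    (hf2 : Integrable (fun x => f x ^ 2) μ) : Integrable f μ := by
  refine Integrable.mono' (((integrable_const (1:ℝ)).add hf2).div_const 2) hf
    (Filter.Eventually.of_forall fun x => ?_)
  simp only [Real.norm_eq_abs, Pi.add_apply]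
  nlinarith [sq_abs (f x), sq_nonneg (|f x| - 1)]

/-- Cauchy–Schwarz lower bound. -/
lemma cs_bound {T Φ₀ : ℝ} (hT : 0 < T) {f : ℝ → ℝ}
    (hm : AEStronglyMeasurable f (volume.restrict (Icc (0:ℝ) T)))
    (hf2 : IntegrableOn (fun t => f t ^ 2) (Icc (0:ℝ) T))
    (hsum : Φ₀ + ∫ t in Icc (0:ℝ) T, f t = 0) :
    Φ₀ ^ 2 / T ≤ ∫ t in Icc (0:ℝ) T, f t ^ 2 := by
  haveI : IsFiniteMeasure (volume.restrict (Icc (0:ℝ) T)) := by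
    constructor
    rw [Measure.restrict_apply_univ, Real.volume_Icc]
    exact ENNReal.ofReal_lt_top
  have hf1 : IntegrableOn f (Icc (0:ℝ) T) := integrable_of_sq hm hf2
  set c : ℝ := -Φ₀ / T with hc
  have hTvol : (volume (Icc (0:ℝ) T)).toReal = T := by
    rw [Real.volume_Icc, sub_zero, ENNReal.toReal_ofReal hT.le]
  have key : (0:ℝ) ≤ ∫ t in Icc (0:ℝ) T, (f t - c) ^ 2 :=
    integral_nonneg fun t => sq_nonneg _
  have expand : ∫ t in Icc (0:ℝ) T, (f t - c) ^ 2
      = (∫ t in Icc (0:ℝ) T, f t ^ 2) - 2 * c * (∫ t in Icc (0:ℝ) T, f t) + c ^ 2 * T := by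
    have h1 : ∀ t, (f t - c) ^ 2 = (f t ^ 2 - (2 * c) * f t) + c ^ 2 := fun t => by ring
    rw [integral_congr_ae (Filter.Eventually.of_forall h1)]
    have hsub : Integrable (fun t => f t ^ 2 - (2 * c) * f t) (volume.restrict (Icc (0:ℝ) T)) :=
      hf2.sub (hf1.const_mul (2 * c))
    rw [integral_add hsub (integrable_const _)]
    rw [integral_sub hf2 (hf1.const_mul (2 * c))]
    rw [integral_const_mul]
    rw [setIntegral_const, smul_eq_mul, measureReal_def, hTvol]
    ring
  have hIf : ∫ t in Icc (0:ℝ) T, f t = -Φ₀ := by linarith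
  rw [expand, hIf] at key
  have hcT : c * T = -Φ₀ := by rw [hc]; field_simp
  rw [div_le_iff₀ hT]
  nlinarith [mul_le_mul_of_nonneg_right key hT.le, hcT, sq_nonneg (c * T + Φ₀)]

/-- Let `S` be a square-integrable martingale on `[0,T]` with
`E[∫_0^T S_t² dt] < ∞`.  Then (i) every `φ ∈ 𝒜_{Φ₀}` with `E[∫_0^T φ_t² dt] < ∞`
satisfies `E[V^{Φ₀,φ}_T] ≤ -Φ₀²Λ/(2T)`; and (ii) the constant strategy
`φ_t ≡ -Φ₀/T` belongs to `𝒜_{Φ₀}` and attains this bound: constant-rate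
liquidation is optimal when the price is a martingale. -/
theorem stmt_10
    {Ω : Type*} {m0 : MeasurableSpace Ω} {μ : Measure Ω} [IsProbabilityMeasure μ]
    (T : ℝ) (hT : 0 < T) (Λ : ℝ) (hΛ : 0 < Λ) (Φ₀ : ℝ)
    (ℱ : Filtration ℝ m0)
    (S : ℝ → Ω → ℝ)
    (hprog : ProgMeasurable ℱ S)
    (hint : ∀ t ∈ Icc (0:ℝ) T, Integrable (S t) μ)
    (hsq : ∀ t ∈ Icc (0:ℝ) T, Integrable (fun ω => (S t ω) ^ 2) μ)
    (hmart : ∀ s ∈ Icc (0:ℝ) T, ∀ t ∈ Icc (0:ℝ) T, s ≤ t → μ[S t | ℱ s] =ᵐ[μ] S s)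
    (hS2 : ∫⁻ ω, (∫⁻ t in Icc (0:ℝ) T, ENNReal.ofReal ((S t ω) ^ 2)) ∂μ < ⊤) :
    (∀ φ : ℝ → Ω → ℝ, isAdmissible T Φ₀ ℱ μ φ →
      (∫⁻ ω, (∫⁻ t in Icc (0:ℝ) T, ENNReal.ofReal ((φ t ω) ^ 2)) ∂μ < ⊤) →
      ∫ ω, wealth T Λ Φ₀ S φ ω ∂μ ≤ -Φ₀ ^ 2 * Λ / (2 * T)) ∧
    isAdmissible T Φ₀ ℱ μ (fun _ _ => -Φ₀ / T) ∧
    ∫ ω, wealth T Λ Φ₀ S (fun _ _ => -Φ₀ / T) ω ∂μ = -Φ₀ ^ 2 * Λ / (2 * T) := by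
  have h0T : (0:ℝ) ∈ Icc (0:ℝ) T := ⟨le_rfl, hT.le⟩
  have hTT : T ∈ Icc (0:ℝ) T := ⟨hT.le, le_rfl⟩
  set ν : Measure ℝ := volume.restrict (Icc (0:ℝ) T) with hνdef
  haveI : IsFiniteMeasure ν := by
    constructor
    rw [hνdef, Measure.restrict_apply_univ, Real.volume_Icc]
    exact ENNReal.ofReal_lt_top
  have hTvol : (ν univ).toReal = T := by
    rw [hνdef, Measure.restrict_apply_univ, Real.volume_Icc, sub_zero,
      ENNReal.toReal_ofReal hT.le]
  -- mean of the martingale is constant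
  have hmean : ∀ t ∈ Icc (0:ℝ) T, ∫ ω, S t ω ∂μ = ∫ ω, S 0 ω ∂μ := by
    intro t ht
    calc ∫ ω, S t ω ∂μ = ∫ ω, (μ[S t | ℱ 0]) ω ∂μ :=
          (integral_condExp (ℱ.le 0) (f := S t)).symm
      _ = ∫ ω, S 0 ω ∂μ := integral_congr_ae (hmart 0 h0T t ht ht.1)
  -- integrability of squares on the product space
  have sq_int : ∀ (ψ : ℝ → Ω → ℝ),
      AEStronglyMeasurable (fun p : Ω × ℝ => ψ p.2 p.1) (μ.prod ν) →
      (∫⁻ ω, (∫⁻ t in Icc (0:ℝ) T, ENNReal.ofReal ((ψ t ω) ^ 2)) ∂μ < ⊤) →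
      Integrable (fun p : Ω × ℝ => ψ p.2 p.1 ^ 2) (μ.prod ν) := by
    intro ψ hm hfin
    have hm2 : AEStronglyMeasurable (fun p : Ω × ℝ => ψ p.2 p.1 ^ 2) (μ.prod ν) := by
      exact hm.pow 2
    refine ⟨hm2, ?_⟩
    have heq : ∀ p : Ω × ℝ, ‖ψ p.2 p.1 ^ 2‖ₑ = ENNReal.ofReal (ψ p.2 p.1 ^ 2) :=
      fun p => Real.enorm_eq_ofReal (sq_nonneg _)
    have : ∫⁻ p, ‖ψ p.2 p.1 ^ 2‖ₑ ∂(μ.prod ν)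
        = ∫⁻ ω, ∫⁻ t, ENNReal.ofReal (ψ t ω ^ 2) ∂ν ∂μ := by
      rw [lintegral_congr heq]
      exact lintegral_prod _ (ENNReal.measurable_ofReal.comp_aemeasurable hm2.aemeasurable)
    rw [HasFiniteIntegral, this]
    exact hfin
  have hSP : AEStronglyMeasurable (fun p : Ω × ℝ => S p.2 p.1) (μ.prod ν) :=
    prog_aesm μ hprog
  have hS2P : Integrable (fun p : Ω × ℝ => S p.2 p.1 ^ 2) (μ.prod ν) := sq_int S hSP hS2
  have hSTa : AEStronglyMeasurable (S T) μ :=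
    ((ProgMeasurable.stronglyAdapted hprog T).mono (ℱ.le T)).aestronglyMeasurable
  have hS0int : Integrable (S 0) μ := hint 0 h0T
  constructor
  · -- part (i)
    intro φ hAdm hφ2
    have hφP : AEStronglyMeasurable (fun p : Ω × ℝ => φ p.2 p.1) (μ.prod ν) :=
      prog_aesm μ hAdm.1
    have hφ2P : Integrable (fun p : Ω × ℝ => φ p.2 p.1 ^ 2) (μ.prod ν) := sq_int φ hφP hφ2
    have hφSP : Integrable (fun p : Ω × ℝ => φ p.2 p.1 * S p.2 p.1) (μ.prod ν) :=
      sq_mul_integrable hφP hSP hφ2P hS2P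
    have hST2P : Integrable (fun p : Ω × ℝ => S T p.1 ^ 2) (μ.prod ν) := by
      have := (hsq T hTT).mul_prod (integrable_const (1:ℝ) (μ := ν))
      simpa using this
    have hSTP : AEStronglyMeasurable (fun p : Ω × ℝ => S T p.1) (μ.prod ν) :=
      hSTa.comp_quasiMeasurePreserving Measure.quasiMeasurePreserving_fst
    have hφSTP : Integrable (fun p : Ω × ℝ => φ p.2 p.1 * S T p.1) (μ.prod ν) :=
      sq_mul_integrable hφP hSTP hφ2P hST2P
    -- the key conditional-expectation step, for a.e. t
    have hstep : ∀ t ∈ Icc (0:ℝ) T, Integrable (fun ω => φ t ω * S t ω) μ →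
        Integrable (fun ω => φ t ω * S T ω) μ →
        ∫ ω, φ t ω * S t ω ∂μ = ∫ ω, φ t ω * S T ω ∂μ := by
      intro t ht h1 h2
      have hφm : StronglyMeasurable[ℱ t] (φ t) := ProgMeasurable.stronglyAdapted hAdm.1 t
      have hpull : μ[φ t * S T | ℱ t] =ᵐ[μ] φ t * μ[S T | ℱ t] :=
        condExp_mul_of_stronglyMeasurable_left hφm h2 (hint T hTT)
      have hmt : μ[S T | ℱ t] =ᵐ[μ] S t := hmart t ht T hTT ht.2
      have e1 : (fun ω => φ t ω * S t ω) =ᵐ[μ] μ[φ t * S T | ℱ t] := by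
        filter_upwards [hpull, hmt] with ω h1ω h2ω
        simp only [Pi.mul_apply] at h1ω h2ω ⊢
        rw [h1ω, h2ω]
      calc ∫ ω, φ t ω * S t ω ∂μ = ∫ ω, (μ[φ t * S T | ℱ t]) ω ∂μ := integral_congr_ae e1
        _ = ∫ ω, φ t ω * S T ω ∂μ := integral_condExp (ℱ.le t) (f := φ t * S T)
    -- Fubini chain
    have hB : ∫ ω, (∫ t, φ t ω * S t ω ∂ν) ∂μ = -Φ₀ * ∫ ω, S 0 ω ∂μ := by
      have h1 : ∫ ω, ∫ t, φ t ω * S t ω ∂ν ∂μ = ∫ t, ∫ ω, φ t ω * S t ω ∂μ ∂ν :=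
        integral_integral_swap (f := fun ω t => φ t ω * S t ω) hφSP
      have h2 : ∫ t, ∫ ω, φ t ω * S t ω ∂μ ∂ν = ∫ t, ∫ ω, φ t ω * S T ω ∂μ ∂ν := by
        refine integral_congr_ae ?_
        filter_upwards [hφSP.prod_left_ae, hφSTP.prod_left_ae,
          ae_restrict_mem measurableSet_Icc] with t h1t h2t ht
        exact hstep t ht h1t h2t
      have h3 : ∫ t, ∫ ω, φ t ω * S T ω ∂μ ∂ν = ∫ ω, ∫ t, φ t ω * S T ω ∂ν ∂μ :=
        (integral_integral_swap (f := fun ω t => φ t ω * S T ω) hφSTP).symm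
      have h4 : ∫ ω, ∫ t, φ t ω * S T ω ∂ν ∂μ = ∫ ω, -Φ₀ * S T ω ∂μ := by
        refine integral_congr_ae ?_
        filter_upwards [hAdm.2.2] with ω hω
        rw [integral_mul_const]
        have hφint : ∫ t, φ t ω ∂ν = -Φ₀ := by
          rw [hνdef]; linarith [hω]
        rw [hφint]
      rw [h1, h2, h3, h4, integral_const_mul, hmean T hTT]
    have hBint : Integrable (fun ω => ∫ t, φ t ω * S t ω ∂ν) μ := hφSP.integral_prod_left
    have hCint : Integrable (fun ω => ∫ t, φ t ω ^ 2 ∂ν) μ := hφ2P.integral_prod_left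
    have hClb : ∀ᵐ ω ∂μ, Φ₀ ^ 2 / T ≤ ∫ t, φ t ω ^ 2 ∂ν := by
      filter_upwards [hAdm.2.1, hAdm.2.2] with ω h1 h2
      exact cs_bound hT (prog_sect hAdm.1 ω) h1 h2
    have hC : Φ₀ ^ 2 / T ≤ ∫ ω, (∫ t, φ t ω ^ 2 ∂ν) ∂μ := by
      have := integral_mono_ae (integrable_const (Φ₀ ^ 2 / T)) hCint hClb
      simpa using this
    -- assemble
    have hwe : ∫ ω, wealth T Λ Φ₀ S φ ω ∂μ
        = -(Λ / 2) * ∫ ω, (∫ t, φ t ω ^ 2 ∂ν) ∂μ := by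
      simp only [wealth, ← hνdef]
      have hi1 : Integrable (fun ω => -Φ₀ * S 0 ω - ∫ t, φ t ω * S t ω ∂ν) μ :=
        (hS0int.const_mul (-Φ₀)).sub hBint
      have hi2 : Integrable (fun ω => Λ / 2 * ∫ t, φ t ω ^ 2 ∂ν) μ := hCint.const_mul _
      have hi3 : Integrable (fun ω => -Φ₀ * S 0 ω) μ := hS0int.const_mul _
      rw [integral_sub hi1 hi2, integral_sub hi3 hBint]
      rw [integral_const_mul, integral_const_mul, hB]
      ring
    rw [hwe]
    have hfin : -Φ₀ ^ 2 * Λ / (2 * T) = -(Λ / 2) * (Φ₀ ^ 2 / T) := by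
      field_simp
    rw [hfin]
    have hΛ2 : (0:ℝ) ≤ Λ / 2 := by linarith
    nlinarith [mul_le_mul_of_nonneg_left hC hΛ2]
  constructor
  · -- part (ii): admissibility of the constant strategy
    refine ⟨progMeasurable_const ℱ _, ?_, ?_⟩
    · refine Filter.Eventually.of_forall fun ω => ?_
      exact (integrableOn_const_iff (C := (-Φ₀ / T) ^ 2)).mpr (Or.inr (by rw [Real.volume_Icc]; exact ENNReal.ofReal_lt_top))
    · refine Filter.Eventually.of_forall fun ω => ?_
      rw [setIntegral_const, smul_eq_mul, measureReal_def, Real.volume_Icc,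
        sub_zero, ENNReal.toReal_ofReal hT.le]
      field_simp
      ring
  · -- part (ii): the value of the constant strategy
    have hSprodint : Integrable (fun p : Ω × ℝ => S p.2 p.1) (μ.prod ν) :=
      integrable_of_sq hSP hS2P
    have hfub : ∫ ω, (∫ t, S t ω ∂ν) ∂μ = T * ∫ ω, S 0 ω ∂μ := by
      have h1 : ∫ ω, ∫ t, S t ω ∂ν ∂μ = ∫ t, ∫ ω, S t ω ∂μ ∂ν :=
        integral_integral_swap (f := fun ω t => S t ω) hSprodint
      have h2 : ∫ t, ∫ ω, S t ω ∂μ ∂ν = ∫ t, (∫ ω, S 0 ω ∂μ) ∂ν := by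
        refine integral_congr_ae ?_
        filter_upwards [ae_restrict_mem measurableSet_Icc] with t ht
        exact hmean t ht
      rw [h1, h2, integral_const, smul_eq_mul, measureReal_def, hTvol]
    have hSint : Integrable (fun ω => ∫ t, S t ω ∂ν) μ := hSprodint.integral_prod_left
    have hwe : ∀ ω, wealth T Λ Φ₀ S (fun _ _ => -Φ₀ / T) ω
        = -Φ₀ * S 0 ω - (-Φ₀ / T) * (∫ t, S t ω ∂ν) - (Λ / 2) * (Φ₀ ^ 2 / T) := by
      intro ω
      simp only [wealth, ← hνdef]
      rw [integral_const_mul (μ := ν) (-Φ₀ / T) (fun t => S t ω)]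
      rw [integral_const, smul_eq_mul, measureReal_def, hTvol]
      have : (-Φ₀ / T) ^ 2 = Φ₀ ^ 2 / T ^ 2 := by
        rw [div_pow]; ring_nf
      rw [this]
      have hT' : T ≠ 0 := hT.ne'
      field_simp
    calc ∫ ω, wealth T Λ Φ₀ S (fun _ _ => -Φ₀ / T) ω ∂μ
        = ∫ ω, (-Φ₀ * S 0 ω - (-Φ₀ / T) * (∫ t, S t ω ∂ν) - (Λ / 2) * (Φ₀ ^ 2 / T)) ∂μ := by
          exact integral_congr_ae (Filter.Eventually.of_forall hwe)
      _ = -Φ₀ ^ 2 * Λ / (2 * T) := by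
          have hi1 : Integrable (fun ω => -Φ₀ * S 0 ω - -Φ₀ / T * ∫ t, S t ω ∂ν) μ :=
            (hS0int.const_mul (-Φ₀)).sub (hSint.const_mul (-Φ₀ / T))
          have hi3 : Integrable (fun ω => -Φ₀ * S 0 ω) μ := hS0int.const_mul _
          rw [integral_sub hi1 (integrable_const _)]
          rw [integral_sub hi3 (hSint.const_mul (-Φ₀ / T))]
          rw [integral_const_mul, integral_const_mul, hfub, integral_const, measureReal_def, measure_univ,
            ENNReal.toReal_one, one_smul]
          have hT' : T ≠ 0 := hT.ne'
          field_simp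
          ring
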